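/- If a Lie algebra 𝔤 of dimension ≥ 4 contains an abelian subalgebra of codimension 1, then 𝔤 admits neither a contact form (if dim 𝔤 is odd) nor an exact symplectic form (if dim 𝔤 is even). -/

import Mathlib

open Module

/-- `η` is a contact form on the odd-dimensional real Lie algebra `L`: equivalently to the
condition `(∂η)^n ∧ η ≠ 0` (with `dim L = 2n+1`, `∂η (x,y) = -η ⁅x,y⁆`), `η ≠ 0` and the
2-form `∂η` is nondegenerate on the kernel of `η`. -/
def IsContactForm {L : Type*} [LieRing L] [LieAlgebra ℝ L] (η : Module.Dual ℝ L) : Prop :=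
  η ≠ 0 ∧ ∀ x : L, η x = 0 → (∀ y : L, η y = 0 → η ⁅x, y⁆ = 0) → x = 0

/-- `α` is an exact symplectic form on the even-dimensional real Lie algebra `L`:
equivalently to `(∂α)^m ≠ 0` (with `dim L = 2m`), the 2-form `∂α (x,y) = -α ⁅x,y⁆`
is nondegenerate. -/
def IsExactSymplecticForm {L : Type*} [LieRing L] [LieAlgebra ℝ L] (α : Module.Dual ℝ L) : Prop :=
  ∀ x : L, (∀ y : L, α ⁅x, y⁆ = 0) → x = 0

/-- Key dimension count: if `S ≤ A` with `A` abelian, and the map `x ↦ f ⁅x, ·⁆` is injective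
on `S`, then since it maps `S` into the dual annihilator of `A`,
`dim S + dim A ≤ dim L`. -/
theorem key_finrank_le {L : Type*} [LieRing L] [LieAlgebra ℝ L] [FiniteDimensional ℝ L]
    (f : Module.Dual ℝ L) (A : LieSubalgebra ℝ L)
    (hab : ∀ x ∈ A, ∀ y ∈ A, ⁅x, y⁆ = (0 : L))
    (S : Submodule ℝ L) (hSA : S ≤ A.toSubmodule)
    (hinj : ∀ x ∈ S, (∀ y : L, f ⁅x, y⁆ = 0) → x = 0) :
    finrank ℝ S + finrank ℝ A ≤ finrank ℝ L := by
  -- the bilinear map B x y = f ⁅x, y⁆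
  let B : L →ₗ[ℝ] Module.Dual ℝ L := LinearMap.mk₂ ℝ (fun x y => f ⁅x, y⁆)
    (fun x y z => by simp [add_lie])
    (fun c x y => by simp [smul_lie])
    (fun x y z => by simp [lie_add])
    (fun c x y => by simp [lie_smul])
  have hmem : ∀ s : S, B s ∈ (A.toSubmodule : Submodule ℝ L).dualAnnihilator := by
    intro s
    rw [Submodule.mem_dualAnnihilator]
    intro w hw
    have : ⁅(s : L), w⁆ = 0 := hab s (hSA s.2) w hw
    simp only [B, LinearMap.mk₂_apply, this, map_zero]
  let ψ : S →ₗ[ℝ] (A.toSubmodule : Submodule ℝ L).dualAnnihilator :=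
    (B.comp S.subtype).codRestrict _ hmem
  have hψ : Function.Injective ψ := by
    intro s t hst
    have h : B s = B t := congrArg Subtype.val hst
    have h2 : ((s : L) - t) ∈ S := sub_mem s.2 t.2
    have h3 : (s : L) - t = 0 := by
      apply hinj _ h2
      intro y
      have : f ⁅(s : L), y⁆ = f ⁅(t : L), y⁆ := by
        have := congrArg (fun g => g y) h
        simpa [B] using this
      simp [sub_lie, this]
    exact Subtype.ext (sub_eq_zero.mp h3)
  have h1 : finrank ℝ S ≤ finrank ℝ (A.toSubmodule : Submodule ℝ L).dualAnnihilator :=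
    LinearMap.finrank_le_finrank_of_injective hψ
  have h2 : finrank ℝ (A.toSubmodule : Submodule ℝ L).dualAnnihilator
      = finrank ℝ (L ⧸ A.toSubmodule) :=
    ((Subspace.quotEquivAnnihilator (A.toSubmodule : Submodule ℝ L)).finrank_eq).symm
  have h3 := Submodule.finrank_quotient_add_finrank (A.toSubmodule : Submodule ℝ L)
  have hAA : finrank ℝ A.toSubmodule = finrank ℝ A := rfl
  omega

theorem codim_one_abelian_no_contact_no_symplectic {L : Type*} [LieRing L] [LieAlgebra ℝ L]
    [FiniteDimensional ℝ L] (hdim : 4 ≤ finrank ℝ L)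
    (A : LieSubalgebra ℝ L)
    (hab : ∀ x ∈ A, ∀ y ∈ A, ⁅x, y⁆ = (0 : L))
    (hcodim : finrank ℝ ↥A = finrank ℝ L - 1) :
    (∀ η : Module.Dual ℝ L, ¬ IsContactForm η) ∧
    (∀ α : Module.Dual ℝ L, ¬ IsExactSymplecticForm α) := by
  constructor
  · rintro η ⟨hη0, hcontact⟩
    -- `ker η` has dimension `dim L - 1`
    have hsurj : Function.Surjective η := by
      obtain ⟨x, hx⟩ : ∃ x, η x ≠ 0 := by
        by_contra h
        push_neg at h
        exact hη0 (LinearMap.ext fun x => h x)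
      intro c
      exact ⟨(c / η x) • x, by rw [map_smul, smul_eq_mul]; field_simp⟩
    have hker : 1 + finrank ℝ (LinearMap.ker η) = finrank ℝ L := by
      have h := LinearMap.finrank_range_add_finrank_ker η
      rw [LinearMap.range_eq_top.mpr hsurj, finrank_top, finrank_self] at h
      exact h
    set S := A.toSubmodule ⊓ LinearMap.ker η with hS
    have hle : S ≤ A.toSubmodule := inf_le_left
    have hinj : ∀ x ∈ S, (∀ y : L, η ⁅x, y⁆ = 0) → x = 0 := by
      intro x hx hy
      exact hcontact x hx.2 fun y _ => hy y
    have hkey := key_finrank_le η A hab S hle hinj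
    have hsup := Submodule.finrank_sup_add_finrank_inf_eq A.toSubmodule (LinearMap.ker η)
    have hsup_le : finrank ℝ ↥(A.toSubmodule ⊔ LinearMap.ker η) ≤ finrank ℝ L :=
      Submodule.finrank_le _
    have hAA : finrank ℝ A.toSubmodule = finrank ℝ A := rfl
    rw [← hS] at hsup
    omega
  · intro α hα
    have hinj : ∀ x ∈ A.toSubmodule, (∀ y : L, α ⁅x, y⁆ = 0) → x = 0 :=
      fun x _ hy => hα x hy
    have hkey := key_finrank_le α A hab A.toSubmodule le_rfl hinj
    have hAA : finrank ℝ A.toSubmodule = finrank ℝ A := rfl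
    omega
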